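/- Let λ ≥ 1, let f : [a,b] → ℂ be continuous with absolutely integrable derivative, and let u : [a,b] → ℝ be C¹ with |u'(t)| ≥ 1 for all t ∈ (a,b) and u' monotone on (a,b). Then |∫_a^b f(t) e^{iλu(t)} dt| ≤ 3λ⁻¹ (|f(b)| + ∫_a^b |f'(t)| dt). -/

import Mathlib

open Real Complex intervalIntegral MeasureTheory Set

-- monotone extension from open to closed interval by continuity
lemma monoOn_Icc_of_Ioo {g : ℝ → ℝ} {a b : ℝ}
    (hc : ContinuousOn g (Set.Icc a b)) (hm : MonotoneOn g (Set.Ioo a b)) :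
    MonotoneOn g (Set.Icc a b) := by
  intro x hx y hy hxy
  rcases eq_or_lt_of_le hxy with rfl | hxy; · exact le_refl _
  obtain ⟨t, ht⟩ : (Set.Ioo x y).Nonempty := ⟨(x+y)/2, by constructor <;> linarith⟩
  have htab : t ∈ Set.Ioo a b := ⟨lt_of_le_of_lt hx.1 ht.1, lt_of_lt_of_le ht.2 hy.2⟩
  have h1 : g x ≤ g t := by
    have hne : (Set.Ioo x t).Nonempty := ⟨(x+t)/2, by constructor <;> linarith [ht.1]⟩
    have hnb : (nhdsWithin x (Set.Ioo x t)).NeBot := by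
      exact mem_closure_iff_nhdsWithin_neBot.mp (by rw [closure_Ioo (ne_of_lt ht.1)]; exact ⟨le_refl x, ht.1.le⟩)
    have htend : Filter.Tendsto g (nhdsWithin x (Set.Ioo x t)) (nhds (g x)) := by
      have := (hc x hx).mono (s := Set.Ioo x t) ?_
      · exact this
      · intro z hz
        exact ⟨le_trans hx.1 hz.1.le, le_trans hz.2.le (le_trans ht.2.le hy.2)⟩
    refine le_of_tendsto htend ?_
    filter_upwards [self_mem_nhdsWithin] with z hz
    exact hm ⟨lt_of_le_of_lt hx.1 hz.1, lt_of_lt_of_le (hz.2.trans ht.2) hy.2⟩ htab (hz.2.le)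
  have h2 : g t ≤ g y := by
    have hnb : (nhdsWithin y (Set.Ioo t y)).NeBot := by
      exact mem_closure_iff_nhdsWithin_neBot.mp (by rw [closure_Ioo (ne_of_lt ht.2)]; exact ⟨ht.2.le, le_refl y⟩)
    have htend : Filter.Tendsto g (nhdsWithin y (Set.Ioo t y)) (nhds (g y)) := by
      have := (hc y hy).mono (s := Set.Ioo t y) ?_
      · exact this
      · intro z hz
        exact ⟨le_trans hx.1 (le_trans ht.1.le hz.1.le), le_trans hz.2.le hy.2⟩
    refine ge_of_tendsto htend ?_
    filter_upwards [self_mem_nhdsWithin] with z hz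
    exact hm htab ⟨lt_of_le_of_lt hx.1 (ht.1.trans hz.1), lt_of_lt_of_le hz.2 hy.2⟩ hz.1.le
  exact h1.trans h2

lemma abel_bound {A B : ℝ} (hAB : A ≤ B) (ψ : ℝ → ℝ)
    (hψm : MonotoneOn ψ (Set.Icc A B)) (hψc : ContinuousOn ψ (Set.Icc A B))
    (h H : ℝ → ℂ) (hh : ContinuousOn h (Set.Icc A B))
    (hH : ∀ t ∈ Set.Icc A B, HasDerivWithinAt H (h t) (Set.Icc A B) t)
    (M : ℝ) (hM : ∀ t ∈ Set.Icc A B, ‖H t‖ ≤ M) :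
    ‖∫ t in A..B, ψ t • h t‖ ≤ 2 * M * (|ψ A| + (ψ B - ψ A)) := by
  -- clamp function
  set c : ℝ → ℝ := fun t => max A (min t B) with hc
  have hcmem : ∀ t, c t ∈ Set.Icc A B := fun t =>
    ⟨le_max_left _ _, max_le hAB (min_le_right _ _)⟩
  have hcid : ∀ t ∈ Set.Icc A B, c t = t := by
    intro t ht; simp [hc, min_eq_left ht.2, max_eq_right ht.1]
  have hcmono : Monotone c := fun x y hxy =>
    max_le_max (le_refl A) (min_le_min hxy (le_refl B))
  have hccont : Continuous c := continuous_const.max (continuous_id.min continuous_const)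
  set φ : ℝ → ℝ := fun t => ψ (c t) with hφ
  have hφmono : Monotone φ := fun x y hxy => hψm (hcmem x) (hcmem y) (hcmono hxy)
  have hφcont : Continuous φ := hψc.comp_continuous hccont hcmem
  set S : StieltjesFunction ℝ := ⟨φ, hφmono, fun x => (hφcont.continuousAt).continuousWithinAt⟩
    with hS
  set μ := S.measure with hμ
  have hμIoc : ∀ x y, μ (Set.Ioc x y) = ENNReal.ofReal (φ y - φ x) := fun x y =>
    S.measure_Ioc x y
  have hABIcc : A ∈ Set.Icc A B := ⟨le_refl A, hAB⟩
  have hBIcc : B ∈ Set.Icc A B := ⟨hAB, le_refl B⟩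
  have hM0 : 0 ≤ M := le_trans (norm_nonneg _) (hM A hABIcc)
  have HCont : ContinuousOn H (Set.Icc A B) := fun t ht => (hH t ht).continuousWithinAt
  -- FTC on subintervals
  have FTC : ∀ s ∈ Set.Icc A B, ∫ t in s..B, h t = H B - H s := by
    intro s hs
    apply intervalIntegral.integral_eq_sub_of_hasDeriv_right_of_le hs.2
      (HCont.mono (Set.Icc_subset_Icc hs.1 le_rfl))
    · intro x hx
      have hxm : x ∈ Set.Icc A B := ⟨hs.1.trans hx.1.le, hx.2.le⟩
      have hAx : A < x := lt_of_le_of_lt hs.1 hx.1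
      exact ((hH x hxm).hasDerivAt (Icc_mem_nhds hAx hx.2)).hasDerivWithinAt
    · apply ContinuousOn.intervalIntegrable
      rw [Set.uIcc_of_le hs.2]
      exact hh.mono (Set.Icc_subset_Icc hs.1 le_rfl)
  set ν := volume.restrict (Set.Ioc A B) with hν
  set μ' := μ.restrict (Set.Ioc A B) with hμ'
  haveI : IsFiniteMeasure ν := ⟨by
    rw [hν, Measure.restrict_apply_univ, Real.volume_Ioc]; exact ENNReal.ofReal_lt_top⟩
  haveI : IsFiniteMeasure μ' := ⟨by
    rw [hμ', Measure.restrict_apply_univ, hμIoc]; exact ENNReal.ofReal_lt_top⟩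
  obtain ⟨M2, hM2⟩ : ∃ M2, ∀ t ∈ Set.Icc A B, ‖h t‖ ≤ M2 :=
    IsCompact.exists_bound_of_continuousOn isCompact_Icc hh
  have hM20 : 0 ≤ M2 := le_trans (norm_nonneg _) (hM2 A hABIcc)
  set k : ℝ × ℝ → ℂ := fun p => if p.2 ≤ p.1 then h p.1 else 0 with hk
  have hmemae : ∀ᵐ p ∂(ν.prod μ'), p.1 ∈ Set.Ioc A B := by
    rw [Filter.eventually_iff, mem_ae_iff]
    have : {p : ℝ × ℝ | p.1 ∈ Set.Ioc A B}ᶜ = (Set.Ioc A B)ᶜ ×ˢ Set.univ := by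
      ext p; simp [Set.mem_prod]
    rw [this, Measure.prod_prod, hν, Measure.restrict_apply measurableSet_Ioc.compl]
    simp
  have hkint : Integrable k (ν.prod μ') := by
    have h1 : AEStronglyMeasurable h ν :=
      (hh.mono Set.Ioc_subset_Icc_self).aestronglyMeasurable measurableSet_Ioc
    have h2 : AEStronglyMeasurable (fun p : ℝ × ℝ => h p.1) (ν.prod μ') := h1.comp_fst
    have hset : MeasurableSet {p : ℝ × ℝ | p.2 ≤ p.1} :=
      measurableSet_le measurable_snd measurable_fst
    have hkind : k = Set.indicator {p : ℝ × ℝ | p.2 ≤ p.1} (fun p => h p.1) := by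
      funext p; by_cases hp : p.2 ≤ p.1 <;> simp [hk, hp, Set.indicator]
    refine Integrable.mono' (integrable_const M2) (by rw [hkind]; exact h2.indicator hset) ?_
    filter_upwards [hmemae] with p hp
    by_cases hc2 : p.2 ≤ p.1
    · simpa [hk, hc2] using hM2 p.1 (Set.Ioc_subset_Icc_self hp)
    · simp [hk, hc2, hM20]
  set w : ℝ → ℝ := fun t => φ t - φ A with hw
  -- step A : rewrite the interval integral
  have stepA : ∫ t in A..B, ψ t • h t
      = (∫ t in Set.Ioc A B, ψ A • h t) + ∫ t in Set.Ioc A B, w t • h t := by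
    rw [intervalIntegral.integral_of_le hAB]
    rw [← MeasureTheory.integral_add]
    · apply setIntegral_congr_fun measurableSet_Ioc
      intro t ht
      have htm : t ∈ Set.Icc A B := Set.Ioc_subset_Icc_self ht
      have hψt : ψ t = ψ A + w t := by
        simp only [hw, hφ, hcid t htm, hcid A hABIcc]; ring
      simp only [hψt, add_smul]
    · exact (((continuousOn_const (c := ψ A)).smul hh).integrableOn_Icc).mono_set Set.Ioc_subset_Icc_self
    · exact ((((hφcont.sub continuous_const).continuousOn).smul hh).integrableOn_Icc).mono_set
        Set.Ioc_subset_Icc_self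
  have step1 : ∫ t in Set.Ioc A B, ψ A • h t = ψ A • (H B - H A) := by
    rw [MeasureTheory.integral_smul]
    congr 1
    rw [← intervalIntegral.integral_of_le hAB]
    exact FTC A hABIcc
  -- step B : Fubini
  have key1 : ∀ t ∈ Set.Ioc A B, (∫ s, k (t, s) ∂μ') = w t • h t := by
    intro t ht
    have : (fun s => k (t, s)) = Set.indicator (Set.Iic t) (fun _ => h t) := by
      funext s; by_cases hs : s ≤ t <;> simp [hk, hs, Set.indicator]
    rw [this, integral_indicator_const (h t) measurableSet_Iic]
    congr 1
    rw [hμ', measureReal_def, Measure.restrict_apply measurableSet_Iic]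
    have : Set.Iic t ∩ Set.Ioc A B = Set.Ioc A t := by
      ext z
      simp only [Set.mem_inter_iff, Set.mem_Iic, Set.mem_Ioc]
      constructor
      · rintro ⟨h1, h2, h3⟩; exact ⟨h2, h1⟩
      · rintro ⟨h1, h2⟩; exact ⟨h2, h1, h2.trans ht.2⟩
    rw [this, hμIoc, ENNReal.toReal_ofReal (sub_nonneg.2 (hφmono ht.1.le))]
  have key2 : ∀ s ∈ Set.Ioc A B, (∫ t, k (t, s) ∂ν) = H B - H s := by
    intro s hs
    have hind : (fun t => k (t, s)) = Set.indicator (Set.Ici s) h := by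
      funext t; by_cases hts : s ≤ t <;> simp [hk, hts, Set.indicator]
    rw [hind, MeasureTheory.integral_indicator measurableSet_Ici, hν,
      Measure.restrict_restrict measurableSet_Ici]
    have hset : Set.Ici s ∩ Set.Ioc A B = Set.Icc s B := by
      ext z
      simp only [Set.mem_inter_iff, Set.mem_Ici, Set.mem_Ioc, Set.mem_Icc]
      constructor
      · rintro ⟨h1, _, h3⟩; exact ⟨h1, h3⟩
      · rintro ⟨h1, h2⟩; exact ⟨h1, lt_of_lt_of_le hs.1 h1, h2⟩
    rw [hset, MeasureTheory.integral_Icc_eq_integral_Ioc,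
      ← intervalIntegral.integral_of_le hs.2]
    exact FTC s (Set.Ioc_subset_Icc_self hs)
  have stepB : ∫ t in Set.Ioc A B, w t • h t = ∫ s, (H B - H s) ∂μ' := by
    have e1 : ∫ t in Set.Ioc A B, w t • h t = ∫ t, (∫ s, k (t, s) ∂μ') ∂ν := by
      refine (MeasureTheory.integral_congr_ae ?_).symm
      filter_upwards [ae_restrict_mem measurableSet_Ioc] with t ht
      exact key1 t ht
    have e2 : ∫ t, (∫ s, k (t, s) ∂μ') ∂ν = ∫ s, (∫ t, k (t, s) ∂ν) ∂μ' :=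
      MeasureTheory.integral_integral_swap hkint
    have e3 : ∫ s, (∫ t, k (t, s) ∂ν) ∂μ' = ∫ s, (H B - H s) ∂μ' := by
      refine MeasureTheory.integral_congr_ae ?_
      filter_upwards [ae_restrict_mem measurableSet_Ioc] with s hs
      exact key2 s hs
    rw [e1, e2, e3]
  rw [stepA, step1, stepB]
  have hHB : ‖H B - H A‖ ≤ 2 * M := by
    refine le_trans (norm_sub_le _ _) ?_
    linarith [hM B hBIcc, hM A hABIcc]
  have n1 : ‖ψ A • (H B - H A)‖ ≤ |ψ A| * (2 * M) := by
    rw [norm_smul, Real.norm_eq_abs]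
    exact mul_le_mul_of_nonneg_left hHB (abs_nonneg _)
  have n2 : ‖∫ s, (H B - H s) ∂μ'‖ ≤ 2 * M * (ψ B - ψ A) := by
    have hb : ∀ᵐ s ∂μ', ‖H B - H s‖ ≤ 2 * M := by
      filter_upwards [ae_restrict_mem measurableSet_Ioc] with s hs
      refine le_trans (norm_sub_le _ _) ?_
      linarith [hM B hBIcc, hM s (Set.Ioc_subset_Icc_self hs)]
    have := MeasureTheory.norm_integral_le_of_norm_le_const hb
    have huniv : (μ' Set.univ).toReal = ψ B - ψ A := by
      rw [hμ', Measure.restrict_apply_univ, hμIoc, ENNReal.toReal_ofReal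
        (sub_nonneg.2 (hφmono hAB))]
      simp only [hφ, hcid A hABIcc, hcid B hBIcc]
    rw [measureReal_def, huniv] at this
    exact this
  calc ‖ψ A • (H B - H A) + ∫ s, (H B - H s) ∂μ'‖
      ≤ ‖ψ A • (H B - H A)‖ + ‖∫ s, (H B - H s) ∂μ'‖ := norm_add_le _ _
    _ ≤ |ψ A| * (2 * M) + 2 * M * (ψ B - ψ A) := add_le_add n1 n2
    _ = 2 * M * (|ψ A| + (ψ B - ψ A)) := by ring

lemma abel_bound' {A B : ℝ} (hAB : A ≤ B) (ψ : ℝ → ℝ)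
    (hψm : MonotoneOn ψ (Set.Icc A B)) (hψc : ContinuousOn ψ (Set.Icc A B))
    (h H : ℝ → ℂ) (hh : ContinuousOn h (Set.Icc A B))
    (hH : ∀ t ∈ Set.Icc A B, HasDerivWithinAt H (h t) (Set.Icc A B) t)
    (M : ℝ) (hM : ∀ t ∈ Set.Icc A B, ‖H t‖ ≤ M) :
    ‖∫ t in A..B, ψ t • h t‖ ≤ 2 * M * (|ψ B| + (ψ B - ψ A)) := by
  set r : ℝ → ℝ := fun t => A + B - t with hr
  have hrmem : ∀ t ∈ Set.Icc A B, r t ∈ Set.Icc A B := by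
    intro t ht; exact ⟨by simp [hr]; linarith [ht.2], by simp [hr]; linarith [ht.1]⟩
  have hrmaps : Set.MapsTo r (Set.Icc A B) (Set.Icc A B) := hrmem
  set ψ' : ℝ → ℝ := fun t => -ψ (r t) with hψ'
  set h' : ℝ → ℂ := fun t => h (r t) with hh'
  set H' : ℝ → ℂ := fun t => -H (r t) with hH'
  have hrc : Continuous r := by fun_prop
  have key := abel_bound hAB ψ'
    (fun x hx y hy hxy => neg_le_neg (hψm (hrmem y hy) (hrmem x hx) (by simp [hr]; linarith)))
    ((hψc.comp hrc.continuousOn hrmaps).neg)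
    h' H'
    (hh.comp hrc.continuousOn hrmaps)
    (fun t ht => by
      have hd : HasDerivWithinAt r (-1) (Set.Icc A B) t :=
        ((hasDerivAt_id t).const_sub (A + B)).hasDerivWithinAt
      have := ((hH (r t) (hrmem t ht)).scomp t hd hrmaps).neg
      simp at this; exact this)
    M (fun t ht => by simpa [hH'] using hM (r t) (hrmem t ht))
  have hint : ∫ t in A..B, ψ' t • h' t = -∫ t in A..B, ψ t • h t := by
    have : ∀ t, ψ' t • h' t = -((fun x => ψ x • h x) (A + B - t)) := by
      intro t; simp [hψ', hh', hr, neg_smul]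
    simp_rw [this, intervalIntegral.integral_neg]
    congr 1
    rw [intervalIntegral.integral_comp_sub_left (fun x => ψ x • h x) (A + B)]
    norm_num
  rw [hint, norm_neg] at key
  have e1 : ψ' A = -ψ B := by simp [hψ', hr]
  have e2 : ψ' B = -ψ A := by simp [hψ', hr]
  rw [e1, e2, abs_neg] at key
  calc ‖∫ t in A..B, ψ t • h t‖ ≤ 2 * M * (|ψ B| + (-ψ A - -ψ B)) := key
    _ = 2 * M * (|ψ B| + (ψ B - ψ A)) := by ring

lemma abel_bound_signed {A B : ℝ} (hAB : A ≤ B) (ψ : ℝ → ℝ)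
    (hψm : MonotoneOn ψ (Set.Icc A B) ∨ AntitoneOn ψ (Set.Icc A B))
    (hψc : ContinuousOn ψ (Set.Icc A B))
    (hsign : (∀ t ∈ Set.Icc A B, 0 ≤ ψ t) ∨ (∀ t ∈ Set.Icc A B, ψ t ≤ 0))
    (hbd : ∀ t ∈ Set.Icc A B, |ψ t| ≤ 1)
    (h H : ℝ → ℂ) (hh : ContinuousOn h (Set.Icc A B))
    (hH : ∀ t ∈ Set.Icc A B, HasDerivWithinAt H (h t) (Set.Icc A B) t)
    (M : ℝ) (hM : ∀ t ∈ Set.Icc A B, ‖H t‖ ≤ M) :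
    ‖∫ t in A..B, ψ t • h t‖ ≤ 2 * M := by
  have hA : A ∈ Set.Icc A B := ⟨le_refl _, hAB⟩
  have hB : B ∈ Set.Icc A B := ⟨hAB, le_refl _⟩
  have hM0 : 0 ≤ M := le_trans (norm_nonneg _) (hM A hA)
  have habsA := hbd A hA
  have habsB := hbd B hB
  rcases hψm with hmono | hanti
  · rcases hsign with hpos | hneg
    · -- monotone nonneg : left bound gives 2 M ψ B
      have := abel_bound hAB ψ hmono hψc h H hh hH M hM
      have e : |ψ A| = ψ A := abs_of_nonneg (hpos A hA)
      nlinarith [abs_le.1 habsB, hpos B hB]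
    · -- monotone nonpos : right bound gives -2 M ψ A
      have := abel_bound' hAB ψ hmono hψc h H hh hH M hM
      have e : |ψ B| = -ψ B := abs_of_nonpos (hneg B hB)
      nlinarith [abs_le.1 habsA]
  · -- antitone : apply to -ψ
    have hmono' : MonotoneOn (fun t => -ψ t) (Set.Icc A B) :=
      fun x hx y hy hxy => neg_le_neg (hanti hx hy hxy)
    have hceq : ∀ t, (fun t => -ψ t) t • h t = -(ψ t • h t) := fun t => by
      simp [neg_smul]
    have hint : ∫ t in A..B, (fun t => -ψ t) t • h t = -∫ t in A..B, ψ t • h t := by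
      simp_rw [hceq, intervalIntegral.integral_neg]
    rcases hsign with hpos | hneg
    · -- antitone nonneg : right bound on -ψ gives 2 M ψ A
      have := abel_bound' hAB (fun t => -ψ t) hmono' hψc.neg h H hh hH M hM
      rw [hint, norm_neg] at this
      have e : |-ψ B| = ψ B := by rw [abs_neg]; exact abs_of_nonneg (hpos B hB)
      simp only [e] at this
      nlinarith [abs_le.1 habsA, hpos A hA]
    · -- antitone nonpos : left bound on -ψ gives -2 M ψ B
      have := abel_bound hAB (fun t => -ψ t) hmono' hψc.neg h H hh hH M hM
      rw [hint, norm_neg] at this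
      have e : |-ψ A| = -ψ A := abs_of_nonneg (by linarith [hneg A hA])
      simp only [e] at this
      nlinarith [abs_le.1 habsB]

lemma antiOn_Icc_of_Ioo {g : ℝ → ℝ} {a b : ℝ}
    (hc : ContinuousOn g (Set.Icc a b)) (hm : AntitoneOn g (Set.Ioo a b)) :
    AntitoneOn g (Set.Icc a b) := by
  have := monoOn_Icc_of_Ioo (g := fun t => -g t) hc.neg
    (fun x hx y hy hxy => neg_le_neg (hm hx hy hxy))
  intro x hx y hy hxy
  have h2 := this hx hy hxy
  simpa using h2

lemma vdc_core (a b : ℝ) (hab : a < b) (lam : ℝ) (hlam : 1 ≤ lam) (u u' : ℝ → ℝ)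
    (hu : ∀ t ∈ Set.Icc a b, HasDerivAt u (u' t) t)
    (hu'c : ContinuousOn u' (Set.Icc a b))
    (hu'1 : ∀ t ∈ Set.Ioo a b, 1 ≤ |u' t|)
    (hu'mono : MonotoneOn u' (Set.Ioo a b) ∨ AntitoneOn u' (Set.Ioo a b))
    (x : ℝ) (hx : x ∈ Set.Icc a b) :
    ‖∫ t in a..x, Complex.exp (Complex.I * lam * u t)‖ ≤ 2 * lam⁻¹ := by
  have hlam0 : (0:ℝ) < lam := lt_of_lt_of_le one_pos hlam
  have haIcc : a ∈ Set.Icc a b := ⟨le_refl _, hab.le⟩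
  have hbIcc : b ∈ Set.Icc a b := ⟨hab.le, le_refl _⟩
  -- |u'| ≥ 1 on the closed interval
  have hnb : (nhdsWithin a (Set.Ioo a b)).NeBot :=
    mem_closure_iff_nhdsWithin_neBot.mp
      (by rw [closure_Ioo hab.ne]; exact ⟨le_refl _, hab.le⟩)
  have hnb' : (nhdsWithin b (Set.Ioo a b)).NeBot :=
    mem_closure_iff_nhdsWithin_neBot.mp
      (by rw [closure_Ioo hab.ne]; exact ⟨hab.le, le_refl _⟩)
  have ha1 : 1 ≤ |u' a| := by
    refine ge_of_tendsto ((((hu'c a haIcc).mono Set.Ioo_subset_Icc_self).abs :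
      Filter.Tendsto _ (nhdsWithin a (Set.Ioo a b)) _)) ?_
    filter_upwards [self_mem_nhdsWithin] with z hz
    exact hu'1 z hz
  have hb1 : 1 ≤ |u' b| := by
    refine ge_of_tendsto ((((hu'c b hbIcc).mono Set.Ioo_subset_Icc_self).abs :
      Filter.Tendsto _ (nhdsWithin b (Set.Ioo a b)) _)) ?_
    filter_upwards [self_mem_nhdsWithin] with z hz
    exact hu'1 z hz
  have habs : ∀ t ∈ Set.Icc a b, 1 ≤ |u' t| := by
    intro t ht
    rcases eq_or_lt_of_le ht.1 with heq | h1
    · rw [← heq]; exact ha1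
    rcases eq_or_lt_of_le ht.2 with heq | h2
    · rw [heq]; exact hb1
    · exact hu'1 t ⟨h1, h2⟩
  have hne : ∀ t ∈ Set.Icc a b, u' t ≠ 0 := by
    intro t ht h0
    have := habs t ht; rw [h0] at this; simp at this; linarith
  -- constant sign
  have hsign : (∀ t ∈ Set.Icc a b, 0 < u' t) ∨ (∀ t ∈ Set.Icc a b, u' t < 0) := by
    by_cases h0 : 0 < u' a
    · left
      intro t ht
      by_contra hc
      push_neg at hc
      have hc' : u' t < 0 := lt_of_le_of_ne hc (hne t ht)
      have hsub : Set.uIcc a t ⊆ Set.Icc a b := by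
        rw [Set.uIcc_of_le ht.1]; exact Set.Icc_subset_Icc le_rfl ht.2
      obtain ⟨c, hc1, hc2⟩ := intermediate_value_uIcc (hu'c.mono hsub)
        (show (0:ℝ) ∈ Set.uIcc (u' a) (u' t) by
          rw [Set.uIcc_of_ge (le_of_lt (lt_trans hc' h0))]
          exact ⟨hc'.le, h0.le⟩)
      have := hne c (hsub hc1); exact this hc2
    · right
      push_neg at h0
      have ha' : u' a < 0 := lt_of_le_of_ne h0 (hne a haIcc)
      intro t ht
      by_contra hc
      push_neg at hc
      have hc' : 0 < u' t := lt_of_le_of_ne hc (Ne.symm (hne t ht))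
      have hsub : Set.uIcc a t ⊆ Set.Icc a b := by
        rw [Set.uIcc_of_le ht.1]; exact Set.Icc_subset_Icc le_rfl ht.2
      obtain ⟨c, hc1, hc2⟩ := intermediate_value_uIcc (hu'c.mono hsub)
        (show (0:ℝ) ∈ Set.uIcc (u' a) (u' t) by
          rw [Set.uIcc_of_le (le_of_lt (lt_trans ha' hc'))]
          exact ⟨ha'.le, hc'.le⟩)
      have := hne c (hsub hc1); exact this hc2
  set ψ : ℝ → ℝ := fun t => (u' t)⁻¹ with hψ
  set g : ℝ → ℂ := fun t => Complex.exp (Complex.I * lam * u t) with hg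
  set h : ℝ → ℂ := fun t => (u' t : ℂ) * g t with hh
  set H : ℝ → ℂ := fun t => (Complex.I * lam)⁻¹ * g t with hH
  have hIlam : (Complex.I * (lam:ℂ)) ≠ 0 :=
    mul_ne_zero Complex.I_ne_zero (by exact_mod_cast hlam0.ne')
  have hucont : ContinuousOn u (Set.Icc a b) :=
    fun t ht => (hu t ht).continuousAt.continuousWithinAt
  have hgcont : ContinuousOn g (Set.Icc a b) := by
    apply Complex.continuous_exp.comp_continuousOn
    exact continuous_const.continuousOn.mul
      (Complex.continuous_ofReal.comp_continuousOn hucont)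
  have hψcont : ContinuousOn ψ (Set.Icc a b) := hu'c.inv₀ hne
  have hhcont : ContinuousOn h (Set.Icc a b) :=
    (Complex.continuous_ofReal.comp_continuousOn hu'c).mul hgcont
  have hHd : ∀ t ∈ Set.Icc a b, HasDerivAt H (h t) t := by
    intro t ht
    have h1 : HasDerivAt (fun s : ℝ => Complex.I * lam * (u s : ℂ))
        (Complex.I * lam * (u' t : ℂ)) t := ((hu t ht).ofReal_comp).const_mul _
    have h3 := (h1.cexp).const_mul ((Complex.I * (lam:ℂ))⁻¹)
    refine h3.congr_deriv ?_
    simp only [hh, hg]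
    have hlamC : (lam:ℂ) ≠ 0 := by exact_mod_cast hlam0.ne'
    field_simp
  have hbd : ∀ t ∈ Set.Icc a b, |ψ t| ≤ 1 := by
    intro t ht
    simp only [hψ, abs_inv]
    exact inv_le_one_of_one_le₀ (habs t ht)
  have hψsign : (∀ t ∈ Set.Icc a b, 0 ≤ ψ t) ∨ (∀ t ∈ Set.Icc a b, ψ t ≤ 0) := by
    rcases hsign with hp | hn
    · exact Or.inl fun t ht => inv_nonneg.2 (hp t ht).le
    · exact Or.inr fun t ht => inv_nonpos.2 (hn t ht).le
  have hψmono : MonotoneOn ψ (Set.Icc a b) ∨ AntitoneOn ψ (Set.Icc a b) := by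
    rcases hsign with hp | hn
    · rcases hu'mono with hm | ha
      · refine Or.inr (antiOn_Icc_of_Ioo hψcont ?_)
        intro p hp' q hq hpq
        have h1 := hm hp' hq hpq
        have h2 := hp p (Set.Ioo_subset_Icc_self hp')
        simp only [hψ, ← one_div]
        exact one_div_le_one_div_of_le h2 h1
      · refine Or.inl (monoOn_Icc_of_Ioo hψcont ?_)
        intro p hp' q hq hpq
        have h1 := ha hp' hq hpq
        have h2 := hp q (Set.Ioo_subset_Icc_self hq)
        simp only [hψ, ← one_div]
        exact one_div_le_one_div_of_le h2 h1
    · rcases hu'mono with hm | ha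
      · refine Or.inr (antiOn_Icc_of_Ioo hψcont ?_)
        intro p hp' q hq hpq
        have h1 := hm hp' hq hpq
        have h2 := hn q (Set.Ioo_subset_Icc_self hq)
        simp only [hψ, ← one_div]
        exact one_div_le_one_div_of_neg_of_le h2 h1
      · refine Or.inl (monoOn_Icc_of_Ioo hψcont ?_)
        intro p hp' q hq hpq
        have h1 := ha hp' hq hpq
        have h2 := hn p (Set.Ioo_subset_Icc_self hp')
        simp only [hψ, ← one_div]
        exact one_div_le_one_div_of_neg_of_le h2 h1
  have hsub : Set.Icc a x ⊆ Set.Icc a b := Set.Icc_subset_Icc le_rfl hx.2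
  have hMn : ∀ t ∈ Set.Icc a x, ‖H t‖ ≤ lam⁻¹ := by
    intro t ht
    have : ‖H t‖ = lam⁻¹ := by
      simp only [hH, hg, norm_mul, norm_inv]
      simp [Complex.norm_exp, map_mul,
        abs_of_pos hlam0]
    rw [this]
  have heq : ∫ t in a..x, Complex.exp (Complex.I * lam * u t) = ∫ t in a..x, ψ t • h t := by
    apply intervalIntegral.integral_congr
    intro t ht
    rw [Set.uIcc_of_le hx.1] at ht
    have hne' : (u' t : ℂ) ≠ 0 := Complex.ofReal_ne_zero.2 (hne t (hsub ht))
    simp only [hψ, hh, hg, Complex.real_smul, Complex.ofReal_inv]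
    field_simp
  rw [heq]
  exact abel_bound_signed hx.1 ψ
    (hψmono.imp (fun m => m.mono hsub) (fun m => m.mono hsub))
    (hψcont.mono hsub)
    (hψsign.imp (fun s t ht => s t (hsub ht)) (fun s t ht => s t (hsub ht)))
    (fun t ht => hbd t (hsub ht))
    h H (hhcont.mono hsub)
    (fun t ht => (hHd t (hsub ht)).hasDerivWithinAt)
    lam⁻¹ hMn

theorem stmt_3 (a b : ℝ) (hab : a < b) (lam : ℝ) (hlam : 1 ≤ lam)
    (f f' : ℝ → ℂ) (u u' : ℝ → ℝ)
    (hfc : ContinuousOn f (Set.Icc a b))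
    (hf' : ∀ t ∈ Set.Ioo a b, HasDerivAt f (f' t) t)
    (hf'int : IntervalIntegrable f' MeasureTheory.volume a b)
    (hu : ∀ t ∈ Set.Icc a b, HasDerivAt u (u' t) t)
    (hu'c : ContinuousOn u' (Set.Icc a b))
    (hu'1 : ∀ t ∈ Set.Ioo a b, 1 ≤ |u' t|)
    (hu'mono : MonotoneOn u' (Set.Ioo a b) ∨ AntitoneOn u' (Set.Ioo a b)) :
    ‖∫ t in a..b, f t * Complex.exp (Complex.I * lam * u t)‖ ≤
      3 * lam⁻¹ * (‖f b‖ + ∫ t in a..b, ‖f' t‖) := by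
  have hlam0 : (0:ℝ) < lam := lt_of_lt_of_le one_pos hlam
  set g : ℝ → ℂ := fun t => Complex.exp (Complex.I * lam * u t) with hg
  set E : ℝ → ℂ := fun x => ∫ t in a..x, g t with hE
  have hucont : ContinuousOn u (Set.Icc a b) :=
    fun t ht => (hu t ht).continuousAt.continuousWithinAt
  have hgcont : ContinuousOn g (Set.Icc a b) := by
    apply Complex.continuous_exp.comp_continuousOn
    exact continuous_const.continuousOn.mul
      (Complex.continuous_ofReal.comp_continuousOn hucont)
  have hgint : IntervalIntegrable g volume a b := by
    apply ContinuousOn.intervalIntegrable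
    rwa [Set.uIcc_of_le hab.le]
  have hEbound : ∀ x ∈ Set.Icc a b, ‖E x‖ ≤ 2 * lam⁻¹ :=
    fun x hx => vdc_core a b hab lam hlam u u' hu hu'c hu'1 hu'mono x hx
  have hEcont : ContinuousOn E (Set.Icc a b) := by
    have := intervalIntegral.continuousOn_primitive_interval
      (f := g) (a := a) (b := b) (μ := volume) ?_
    · rwa [Set.uIcc_of_le hab.le] at this
    · rw [Set.uIcc_of_le hab.le]
      exact hgcont.integrableOn_Icc
  have hEderiv : ∀ t ∈ Set.Ioo a b, HasDerivAt E (g t) t := by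
    intro t ht
    apply intervalIntegral.integral_hasDerivAt_right
    · refine hgint.mono_set ?_
      rw [Set.uIcc_of_le ht.1.le, Set.uIcc_of_le hab.le]
      exact Set.Icc_subset_Icc le_rfl ht.2.le
    · exact (hgcont.mono Set.Ioo_subset_Icc_self).stronglyMeasurableAtFilter
        isOpen_Ioo t ht
    · have h1 : ContinuousAt u t := (hu t (Set.Ioo_subset_Icc_self ht)).continuousAt
      exact Complex.continuous_exp.continuousAt.comp
        (continuousAt_const.mul (Complex.continuous_ofReal.continuousAt.comp h1))
  set F : ℝ → ℂ := fun t => f t * E t with hF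
  have hFcont : ContinuousOn F (Set.Icc a b) := hfc.mul hEcont
  have hint1 : IntervalIntegrable (fun t => f' t * E t) volume a b := by
    apply hf'int.mul_continuousOn
    rwa [Set.uIcc_of_le hab.le]
  have hint2 : IntervalIntegrable (fun t => f t * g t) volume a b := by
    apply ContinuousOn.intervalIntegrable
    rw [Set.uIcc_of_le hab.le]
    exact hfc.mul hgcont
  have hparts : ∫ t in a..b, (f' t * E t + f t * g t) = f b * E b - f a * E a := by
    apply intervalIntegral.integral_eq_sub_of_hasDeriv_right_of_le hab.le hFcont
    · intro t ht
      exact ((hf' t ht).mul (hEderiv t ht)).hasDerivWithinAt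
    · exact hint1.add hint2
  have hEa : E a = 0 := intervalIntegral.integral_same
  rw [hEa, mul_zero, sub_zero] at hparts
  have hadd := intervalIntegral.integral_add hint1 hint2
  rw [hparts] at hadd
  have hsplit : ∫ t in a..b, f t * g t = f b * E b - ∫ t in a..b, f' t * E t := by
    linear_combination -hadd
  have hb1 : ‖f b * E b‖ ≤ ‖f b‖ * (2 * lam⁻¹) := by
    rw [norm_mul]
    exact mul_le_mul_of_nonneg_left (hEbound b ⟨hab.le, le_rfl⟩) (norm_nonneg _)
  have hb2 : ‖∫ t in a..b, f' t * E t‖ ≤ (∫ t in a..b, ‖f' t‖) * (2 * lam⁻¹) := by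
    refine le_trans (intervalIntegral.norm_integral_le_integral_norm hab.le) ?_
    have hmono : ∫ t in a..b, ‖f' t * E t‖ ≤ ∫ t in a..b, ‖f' t‖ * (2 * lam⁻¹) := by
      apply intervalIntegral.integral_mono_on hab.le
      · exact hint1.norm
      · exact hf'int.norm.mul_const _
      · intro t ht
        rw [norm_mul]
        exact mul_le_mul_of_nonneg_left (hEbound t ht) (norm_nonneg _)
    rwa [intervalIntegral.integral_mul_const] at hmono
  have hnorm0 : 0 ≤ ∫ t in a..b, ‖f' t‖ :=
    intervalIntegral.integral_nonneg hab.le (fun _ _ => norm_nonneg _)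
  calc ‖∫ t in a..b, f t * g t‖ = ‖f b * E b - ∫ t in a..b, f' t * E t‖ := by rw [hsplit]
    _ ≤ ‖f b * E b‖ + ‖∫ t in a..b, f' t * E t‖ := norm_sub_le _ _
    _ ≤ ‖f b‖ * (2 * lam⁻¹) + (∫ t in a..b, ‖f' t‖) * (2 * lam⁻¹) := add_le_add hb1 hb2
    _ ≤ 3 * lam⁻¹ * (‖f b‖ + ∫ t in a..b, ‖f' t‖) := by
        nlinarith [norm_nonneg (f b), inv_nonneg.2 hlam0.le]
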